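/- Let a(n,k,s) denote the number of k-element chains in E*_n all of whose elements have signature at most s, where a(n,k,s) = 0 for s < 0. Then for all n >= 1 and s >= 0: a(n,k,s) = delta_{k,0} + sum over j from 1 to n of sum over t from 0 to j of a(n-j, k-1, s + 2t - j), where delta_{k,0} is 1 if k = 0 and 0 otherwise. -/

import Mathlib

/-- `chainA n k s` is the number of `k`-element chains in
`E*_n = {(a,b) : 1 ≤ a+b ≤ n}` all of whose elements have signature `a - b` at most `s`;
it is `0` for `k < 0` or `s < 0`. -/
noncomputable def chainA (n : ℕ) (k s : ℤ) : ℕ :=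
  if k < 0 ∨ s < 0 then 0
  else Nat.card {S : Finset (ℕ × ℕ) // S.card = k.toNat ∧
    (∀ p ∈ S, 1 ≤ p.1 + p.2 ∧ p.1 + p.2 ≤ n) ∧
    IsChain (· ≤ ·) (S : Set (ℕ × ℕ)) ∧
    (∀ p ∈ S, (p.1 : ℤ) - (p.2 : ℤ) ≤ s)}

/-- The predicate used inside `chainA`. -/
def chainP (n k' : ℕ) (s : ℤ) (S : Finset (ℕ × ℕ)) : Prop :=
  S.card = k' ∧
    (∀ p ∈ S, 1 ≤ p.1 + p.2 ∧ p.1 + p.2 ≤ n) ∧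
    IsChain (· ≤ ·) (S : Set (ℕ × ℕ)) ∧
    (∀ p ∈ S, (p.1 : ℤ) - (p.2 : ℤ) ≤ s)

def chainBox (n : ℕ) : Finset (ℕ × ℕ) := Finset.range (n+1) ×ˢ Finset.range (n+1)

open scoped Classical in
noncomputable def chainAA (n k' : ℕ) (s : ℤ) : Finset (Finset (ℕ × ℕ)) :=
  (chainBox n).powerset.filter (chainP n k' s)

lemma mem_chainAA {n k' : ℕ} {s : ℤ} {S : Finset (ℕ × ℕ)} :
    S ∈ chainAA n k' s ↔ chainP n k' s S := by
  classical
  constructor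
  · intro h
    exact (Finset.mem_filter.mp h).2
  · intro h
    refine Finset.mem_filter.mpr ⟨Finset.mem_powerset.mpr ?_, h⟩
    intro p hp
    have := h.2.1 p hp
    simp only [chainBox, Finset.mem_product, Finset.mem_range]
    omega

lemma chainA_eq_card {n : ℕ} {k s : ℤ} (hk : 0 ≤ k) (hs : 0 ≤ s) :
    chainA n k s = (chainAA n k.toNat s).card := by
  rw [chainA, if_neg (by omega)]
  rw [Nat.card_congr (Equiv.subtypeEquivRight (fun S => ?_)), Nat.card_eq_finsetCard]
  exact (mem_chainAA (n := n) (k' := k.toNat) (s := s) (S := S)).symm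

noncomputable def chainMin (S : Finset (ℕ × ℕ)) : ℕ × ℕ :=
  if h : ∃ m ∈ S, ∀ p ∈ S, m ≤ p then h.choose else (0, 0)

lemma chainMin_spec {S : Finset (ℕ × ℕ)} (h : ∃ m ∈ S, ∀ p ∈ S, m ≤ p) :
    chainMin S ∈ S ∧ ∀ p ∈ S, chainMin S ≤ p := by
  rw [chainMin, dif_pos h]
  exact ⟨h.choose_spec.1, h.choose_spec.2⟩

lemma chainMin_eq {S : Finset (ℕ × ℕ)} {m : ℕ × ℕ} (hm : m ∈ S)
    (hmin : ∀ p ∈ S, m ≤ p) : chainMin S = m := by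
  have h : ∃ m ∈ S, ∀ p ∈ S, m ≤ p := ⟨m, hm, hmin⟩
  obtain ⟨h1, h2⟩ := chainMin_spec h
  exact le_antisymm (h2 m hm) (hmin _ h1)

lemma chain_exists_min {S : Finset (ℕ × ℕ)} (hS : S.Nonempty)
    (hc : IsChain (· ≤ ·) (S : Set (ℕ × ℕ))) : ∃ m ∈ S, ∀ p ∈ S, m ≤ p := by
  obtain ⟨m, hm, hmin⟩ := S.exists_minimal hS
  refine ⟨m, hm, fun p hp => ?_⟩
  rcases eq_or_ne p m with rfl | hne
  · exact le_rfl
  · rcases hc hp hm hne with h | h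
    · exact hmin hp h
    · exact h

lemma chain_fiber_card (n : ℕ) (k s : ℤ) (hk : 0 < k) (hs : 0 ≤ s) (j t : ℕ)
    (hj1 : 1 ≤ j) (hjn : j ≤ n) (htj : t ≤ j) :
    (Finset.filter
       (fun S => (⟨(chainMin S).1 + (chainMin S).2, (chainMin S).2⟩ : Σ _ : ℕ, ℕ) = ⟨j, t⟩)
       (chainAA n k.toNat s)).card
      = chainA (n - j) (k - 1) (s + 2 * (t : ℤ) - (j : ℤ)) := by
  classical
  set a : ℕ := j - t with ha
  set m : ℕ × ℕ := (a, t) with hm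
  have hm1 : m.1 = a := rfl
  have hm2 : m.2 = t := rfl
  have key : ∀ S : Finset (ℕ × ℕ),
      (S ∈ chainAA n k.toNat s ∧
        (⟨(chainMin S).1 + (chainMin S).2, (chainMin S).2⟩ : Σ _ : ℕ, ℕ) = ⟨j, t⟩)
      ↔ (chainP n k.toNat s S ∧ m ∈ S ∧ ∀ p ∈ S, m ≤ p) := by
    intro S
    constructor
    · rintro ⟨hS, hf⟩
      have hP := mem_chainAA.mp hS
      have hne : S.Nonempty := by
        rw [← Finset.card_pos, hP.1]; omega
      have hex := chain_exists_min hne hP.2.2.1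
      obtain ⟨hmem, hmin⟩ := chainMin_spec hex
      rw [Sigma.ext_iff] at hf
      have h1 : (chainMin S).1 + (chainMin S).2 = j := hf.1
      have h2 : (chainMin S).2 = t := eq_of_heq hf.2
      have hMm : chainMin S = m := by
        rw [hm]; exact Prod.ext_iff.mpr ⟨by omega, h2⟩
      rw [hMm] at hmem hmin
      exact ⟨hP, hmem, hmin⟩
    · rintro ⟨hP, hmem, hmin⟩
      have hMm : chainMin S = m := chainMin_eq hmem hmin
      refine ⟨mem_chainAA.mpr hP, ?_⟩
      rw [hMm, hm]
      simp only [Prod.fst, Prod.snd]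
      have h1 : a + t = j := by omega
      rw [show ((a, t) : ℕ × ℕ).1 + ((a, t) : ℕ × ℕ).2 = j from h1]
  rcases lt_or_ge (s + 2 * (t : ℤ) - (j : ℤ)) 0 with hneg | hpos
  · rw [chainA, if_pos (Or.inr hneg)]
    rw [Finset.card_eq_zero, Finset.eq_empty_iff_forall_notMem]
    intro S hS
    rw [Finset.mem_filter] at hS
    obtain ⟨hP, hmem, -⟩ := (key S).mp hS
    have hsigm := hP.2.2.2 m hmem
    rw [hm1, hm2] at hsigm
    omega
  · rw [chainA_eq_card (by omega) hpos]
    refine Finset.card_bij'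
      (fun S _ => (S.erase m).image (fun p => (p.1 - a, p.2 - t)))
      (fun T _ => insert m (T.image (fun p => (p.1 + a, p.2 + t)))) ?_ ?_ ?_ ?_
    · -- forward well-defined
      intro S hS
      obtain ⟨⟨hcard, hlev, hch, hsig⟩, hmem, hmin⟩ := (key S).mp (Finset.mem_filter.mp hS)
      have herase : ∀ p ∈ S.erase m, a ≤ p.1 ∧ t ≤ p.2 ∧ (p.1 ≠ a ∨ p.2 ≠ t) := by
        intro p hp
        have hpS := Finset.mem_of_mem_erase hp
        have hpne := Finset.ne_of_mem_erase hp
        have hle := hmin p hpS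
        have h12 := Prod.le_def.mp hle
        rw [hm1] at h12
        refine ⟨h12.1, h12.2, ?_⟩
        by_contra hcon
        push_neg at hcon
        exact hpne (Prod.ext_iff.mpr ⟨by rw [hcon.1, hm1], by rw [hcon.2, hm2]⟩)
      refine mem_chainAA.mpr ⟨?_, ?_, ?_, ?_⟩
      · rw [Finset.card_image_of_injOn, Finset.card_erase_of_mem hmem, hcard]
        · omega
        · intro p hp q hq hpq
          have h1 := herase p hp
          have h2 := herase q hq
          simp only [Prod.mk.injEq] at hpq
          exact Prod.ext_iff.mpr ⟨by omega, by omega⟩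
      · intro q hq
        obtain ⟨p, hp, rfl⟩ := Finset.mem_image.mp hq
        have h := herase p hp
        have hl := hlev p (Finset.mem_of_mem_erase hp)
        simp only
        omega
      · intro x hx y hy hne
        obtain ⟨p, hp, rfl⟩ := Finset.mem_image.mp hx
        obtain ⟨p', hp', rfl⟩ := Finset.mem_image.mp hy
        have hpp : p ≠ p' := by rintro rfl; exact hne rfl
        have h1 := herase p hp
        have h2 := herase p' hp'
        rcases hch (Finset.mem_coe.mpr (Finset.mem_of_mem_erase hp))
          (Finset.mem_coe.mpr (Finset.mem_of_mem_erase hp')) hpp with hle | hle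
        · left
          have h12 := Prod.le_def.mp hle
          exact Prod.le_def.mpr ⟨show p.1 - a ≤ p'.1 - a by omega,
            show p.2 - t ≤ p'.2 - t by omega⟩
        · right
          have h12 := Prod.le_def.mp hle
          exact Prod.le_def.mpr ⟨show p'.1 - a ≤ p.1 - a by omega,
            show p'.2 - t ≤ p.2 - t by omega⟩
      · intro q hq
        obtain ⟨p, hp, rfl⟩ := Finset.mem_image.mp hq
        have h := herase p hp
        have hsp := hsig p (Finset.mem_of_mem_erase hp)
        simp only
        omega
    · -- backward well-defined
      intro T hT
      obtain ⟨hcard, hlev, hch, hsig⟩ := mem_chainAA.mp hT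
      have hnotmem : m ∉ T.image (fun p => (p.1 + a, p.2 + t)) := by
        intro hmm
        obtain ⟨p, hp, hpe⟩ := Finset.mem_image.mp hmm
        have hl := hlev p hp
        have h12 := Prod.ext_iff.mp hpe
        rw [hm1] at h12
        simp only at h12
        omega
      refine Finset.mem_filter.mpr ((key _).mpr ⟨⟨?_, ?_, ?_, ?_⟩,
        Finset.mem_insert_self _ _, ?_⟩)
      · rw [Finset.card_insert_of_notMem hnotmem,
          Finset.card_image_of_injOn, hcard]
        · omega
        · intro p hp q hq hpq
          simp only [Prod.mk.injEq] at hpq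
          exact Prod.ext_iff.mpr ⟨by omega, by omega⟩
      · intro q hq
        rcases Finset.mem_insert.mp hq with rfl | hq'
        · rw [hm1, hm2]; omega
        · obtain ⟨p, hp, rfl⟩ := Finset.mem_image.mp hq'
          have hl := hlev p hp
          simp only
          omega
      · intro x hx y hy hne
        rcases Finset.mem_insert.mp hx with rfl | hx' <;>
          rcases Finset.mem_insert.mp hy with h | hy'
        · exact absurd h.symm hne
        · left
          obtain ⟨p, hp, rfl⟩ := Finset.mem_image.mp hy'
          exact Prod.le_def.mpr ⟨show m.1 ≤ p.1 + a by omega,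
            show m.2 ≤ p.2 + t by omega⟩
        · right
          subst h
          obtain ⟨p, hp, rfl⟩ := Finset.mem_image.mp hx'
          exact Prod.le_def.mpr ⟨show m.1 ≤ p.1 + a by omega,
            show m.2 ≤ p.2 + t by omega⟩
        · obtain ⟨p, hp, rfl⟩ := Finset.mem_image.mp hx'
          obtain ⟨p', hp', rfl⟩ := Finset.mem_image.mp hy'
          have hpp : p ≠ p' := by rintro rfl; exact hne rfl
          rcases hch (Finset.mem_coe.mpr hp) (Finset.mem_coe.mpr hp') hpp with hle | hle
          · left
            have h12 := Prod.le_def.mp hle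
            exact Prod.le_def.mpr ⟨show p.1 + a ≤ p'.1 + a by omega,
              show p.2 + t ≤ p'.2 + t by omega⟩
          · right
            have h12 := Prod.le_def.mp hle
            exact Prod.le_def.mpr ⟨show p'.1 + a ≤ p.1 + a by omega,
              show p'.2 + t ≤ p.2 + t by omega⟩
      · intro q hq
        rcases Finset.mem_insert.mp hq with rfl | hq'
        · rw [hm1, hm2]; omega
        · obtain ⟨p, hp, rfl⟩ := Finset.mem_image.mp hq'
          have hsp := hsig p hp
          simp only
          omega
      · intro p hp
        rcases Finset.mem_insert.mp hp with rfl | hp'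
        · exact le_rfl
        · obtain ⟨q, hq, rfl⟩ := Finset.mem_image.mp hp'
          exact Prod.le_def.mpr ⟨show m.1 ≤ q.1 + a by omega,
            show m.2 ≤ q.2 + t by omega⟩
    · -- left inverse
      intro S hS
      obtain ⟨⟨hcard, hlev, hch, hsig⟩, hmem, hmin⟩ := (key S).mp (Finset.mem_filter.mp hS)
      beta_reduce
      rw [Finset.image_image]
      have himg : (S.erase m).image
          ((fun p : ℕ × ℕ => (p.1 + a, p.2 + t)) ∘ (fun p : ℕ × ℕ => (p.1 - a, p.2 - t)))
          = S.erase m := by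
        rw [show ((fun p : ℕ × ℕ => (p.1 + a, p.2 + t)) ∘
            (fun p : ℕ × ℕ => (p.1 - a, p.2 - t)))
            = (fun p : ℕ × ℕ => (p.1 - a + a, p.2 - t + t)) from rfl]
        rw [Finset.image_congr (g := id), Finset.image_id]
        intro p hp
        have hpS := Finset.mem_of_mem_erase hp
        have hle := Prod.le_def.mp (hmin p hpS)
        rw [hm1] at hle
        exact Prod.ext_iff.mpr ⟨by simp; omega, by simp; omega⟩
      rw [himg, Finset.insert_erase hmem]
    · -- right inverse
      intro T hT
      obtain ⟨hcard, hlev, hch, hsig⟩ := mem_chainAA.mp hT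
      have hnotmem : m ∉ T.image (fun p => (p.1 + a, p.2 + t)) := by
        intro hmm
        obtain ⟨p, hp, hpe⟩ := Finset.mem_image.mp hmm
        have hl := hlev p hp
        have h12 := Prod.ext_iff.mp hpe
        rw [hm1] at h12
        simp only at h12
        omega
      beta_reduce
      rw [Finset.erase_insert hnotmem, Finset.image_image]
      rw [show ((fun p : ℕ × ℕ => (p.1 - a, p.2 - t)) ∘
          (fun p : ℕ × ℕ => (p.1 + a, p.2 + t)))
          = (fun p : ℕ × ℕ => (p.1 + a - a, p.2 + t - t)) from rfl]
      rw [Finset.image_congr (g := id), Finset.image_id]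
      intro p hp
      exact Prod.ext_iff.mpr ⟨by simp, by simp⟩

theorem chainA_recursion (n : ℕ) (hn : 1 ≤ n) (s : ℤ) (hs : 0 ≤ s) (k : ℤ) :
    chainA n k s = (if k = 0 then 1 else 0) +
      ∑ j ∈ Finset.Icc 1 n, ∑ t ∈ Finset.range (j + 1),
        chainA (n - j) (k - 1) (s + 2 * (t : ℤ) - (j : ℤ)) := by
  rcases lt_trichotomy k 0 with hk | rfl | hk
  · -- k < 0
    rw [chainA, if_pos (Or.inl hk), if_neg (by omega)]
    symm
    simp only [zero_add]
    refine Finset.sum_eq_zero fun j hj => Finset.sum_eq_zero fun t ht => ?_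
    rw [chainA, if_pos (Or.inl (by omega))]
  · -- k = 0
    rw [if_pos rfl]
    have h0 : ∀ j ∈ Finset.Icc 1 n, ∀ t ∈ Finset.range (j + 1),
        chainA (n - j) (0 - 1) (s + 2 * (t : ℤ) - (j : ℤ)) = 0 := by
      intro j hj t ht
      rw [chainA, if_pos (Or.inl (by omega))]
    rw [Finset.sum_congr rfl (fun j hj => Finset.sum_eq_zero (h0 j hj)),
      Finset.sum_const_zero, add_zero]
    rw [chainA, if_neg (by omega)]
    rw [Nat.card_eq_one_iff_unique]
    constructor
    · constructor
      intro ⟨S, hS⟩ ⟨T, hT⟩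
      have h1 : S = ∅ := Finset.card_eq_zero.mp (by simpa using hS.1)
      have h2 : T = ∅ := Finset.card_eq_zero.mp (by simpa using hT.1)
      subst h1; subst h2; rfl
    · refine ⟨⟨∅, ?_⟩⟩
      refine ⟨by simp, by simp, ?_, by simp⟩
      simp only [Finset.coe_empty]
      exact Set.Subsingleton.isChain (Set.subsingleton_empty)
  · -- 0 < k
    classical
    rw [if_neg (by omega), chainA_eq_card (le_of_lt hk) hs, zero_add]
    have hmaps : ∀ S ∈ chainAA n k.toNat s,
        (⟨(chainMin S).1 + (chainMin S).2, (chainMin S).2⟩ : Σ _ : ℕ, ℕ)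
          ∈ (Finset.Icc 1 n).sigma (fun j => Finset.range (j + 1)) := by
      intro S hS
      obtain ⟨hcard, hlev, hch, hsig⟩ := mem_chainAA.mp hS
      have hne : S.Nonempty := by rw [← Finset.card_pos, hcard]; omega
      obtain ⟨hmem, hmin⟩ := chainMin_spec (chain_exists_min hne hch)
      have := hlev _ hmem
      refine Finset.mem_sigma.mpr ⟨Finset.mem_Icc.mpr
        ⟨show 1 ≤ (chainMin S).1 + (chainMin S).2 by omega,
         show (chainMin S).1 + (chainMin S).2 ≤ n by omega⟩,
        Finset.mem_range.mpr
          (show (chainMin S).2 < (chainMin S).1 + (chainMin S).2 + 1 by omega)⟩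
    rw [Finset.card_eq_sum_card_fiberwise hmaps, Finset.sum_sigma]
    refine Finset.sum_congr rfl fun j hj => Finset.sum_congr rfl fun t ht => ?_
    rw [Finset.mem_Icc] at hj
    rw [Finset.mem_range] at ht
    exact chain_fiber_card n k s hk hs j t hj.1 hj.2 (by omega)
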